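/- arXiv:1712.08211 — 3 statements merged into one kernel-verified Lean document; each statement's English description precedes it below -/
import Mathlib

section
/- Among all modifications of the outcome of the form Ŷ = T·(R + f(T)) with f : ℝ → ℝ measurable and T·(R + f(T)) square-integrable, the choice f(T) = −E[R|T] achieves the minimum possible variance; that is, for every such f one has Var[T·(R − E[R|T])] ≤ Var[T·(R + f(T))], and the minimal value satisfies Var[T·(R − E[R|T])] = E[T²·(R − E[R|T])²]. -/
open MeasureTheory ProbabilityTheory

/-- Variance as defined in the context: `Var[Z] = E[Z²] − (E[Z])²`. -/
noncomputable def Var {Ω : Type*} [MeasureSpace Ω] (Z : Ω → ℝ) : ℝ :=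
  (∫ ω, (Z ω) ^ 2) - (∫ ω, Z ω) ^ 2

/-- Product of two L² functions is integrable. -/
lemma integrable_mul_of_memL2 {α : Type*} {mα : MeasurableSpace α} {μ : Measure α}
    {f g : α → ℝ} (hf : MemLp f 2 μ) (hg : MemLp g 2 μ) :
    Integrable (fun ω => f ω * g ω) μ := by
  have h : MemLp (f • g) 1 μ := hg.smul hf
  rw [memLp_one_iff_integrable] at h
  exact h

/-- The conditional expectation of an L² function is in L². -/
lemma memℒp_two_condexp {α : Type*} {m m0 : MeasurableSpace α} {μ : Measure α}
    [IsFiniteMeasure μ] (hm : m ≤ m0) {f : α → ℝ} (hf : MemLp f 2 μ) :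
    MemLp (μ[f|m]) 2 μ := by
  haveI : SigmaFinite (μ.trim hm) := inferInstance
  set g : α → ℝ := (condExpL2 ℝ ℝ hm (hf.toLp f) : α → ℝ) with hg_def
  have hg : MemLp g 2 μ := Lp.memLp _
  have heq : g =ᵐ[μ] μ[f|m] := by
    refine ae_eq_condExp_of_forall_setIntegral_eq hm
      (memLp_one_iff_integrable.mp (hf.mono_exponent (by norm_num)))
      (fun s _ _ => (hg.integrable (by norm_num)).integrableOn)
      (fun s hs hμs => ?_) (aestronglyMeasurable_condExpL2 hm _)
    rw [integral_condExpL2_eq hm (hf.toLp f) hs hμs.ne]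
    exact setIntegral_congr_ae (hm s hs) ((hf.coeFn_toLp).mono fun x hx _ => hx)
  exact hg.ae_eq heq

/-- Among all modified outcomes `Ŷ = T·(R + f(T))` with `f` measurable and `Ŷ`
square-integrable, the choice `f(T) = −E[R|T]` achieves the minimal variance, and this
minimum equals `E[T²·(R − E[R|T])²]`. -/
theorem min_variance_of_per_treatment_centering
    {Ω : Type*} [MeasureSpace Ω] [IsProbabilityMeasure (ℙ : Measure Ω)]
    (T R : Ω → ℝ) (hT : Measurable T) (hTbdd : ∃ C : ℝ, ∀ ω, |T ω| ≤ C)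
    (hR : MemLp R 2 ℙ)
    (cE : Ω → ℝ) (hcE : cE = ℙ[R | MeasurableSpace.comap T inferInstance]) :
    (∀ f : ℝ → ℝ, Measurable f →
        MemLp (fun ω => T ω * (R ω + f (T ω))) 2 ℙ →
        Var (fun ω => T ω * (R ω - cE ω)) ≤ Var (fun ω => T ω * (R ω + f (T ω)))) ∧
      Var (fun ω => T ω * (R ω - cE ω)) = ∫ ω, (T ω) ^ 2 * (R ω - cE ω) ^ 2 := by
  have hm : MeasurableSpace.comap T inferInstance ≤ ‹MeasureSpace Ω›.toMeasurableSpace :=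
    hT.comap_le
  obtain ⟨C, hC⟩ := hTbdd
  have hTm : Measurable[MeasurableSpace.comap T inferInstance] T := fun s hs => ⟨s, hs, rfl⟩
  have hTmem : MemLp T ⊤ ℙ :=
    memLp_top_of_bound hT.aestronglyMeasurable C (Filter.Eventually.of_forall hC)
  have hcEmem : MemLp cE 2 ℙ := by rw [hcE]; exact memℒp_two_condexp hm hR
  have hRcE : MemLp (fun ω => R ω - cE ω) 2 ℙ := hR.sub hcEmem
  -- key : integrate against comap-measurable g
  have key : ∀ g : Ω → ℝ, StronglyMeasurable[MeasurableSpace.comap T inferInstance] g →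
      Integrable (fun ω => g ω * R ω) ℙ →
      Integrable (fun ω => g ω * cE ω) ℙ →
      (∫ ω, g ω * R ω) = ∫ ω, g ω * cE ω := by
    intro g hg hgR hgcE
    have h1 : (∫ ω, g ω * R ω)
        = ∫ ω, (ℙ[(fun ω => g ω * R ω) | MeasurableSpace.comap T inferInstance]) ω :=
      (integral_condExp hm (f := fun ω => g ω * R ω)).symm
    rw [h1]
    have h2 : ℙ[(fun ω => g ω * R ω) | MeasurableSpace.comap T inferInstance]
        =ᵐ[ℙ] fun ω => g ω * cE ω := by
      have := condExp_mul_of_stronglyMeasurable_left (μ := ℙ) hg (by exact hgR)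
        (memLp_one_iff_integrable.mp (hR.mono_exponent (by norm_num)))
      rw [hcE]
      exact this
    exact integral_congr_ae h2
  set X : Ω → ℝ := fun ω => T ω * (R ω - cE ω) with hX_def
  have hXmem : MemLp X 2 ℙ := by
    have h := hRcE.smul (r := 2) hTmem
    exact h.ae_eq (Filter.Eventually.of_forall fun ω => by
      simp [hX_def, Pi.smul_apply, smul_eq_mul])
  -- E[X] = 0
  have hTsm : StronglyMeasurable[MeasurableSpace.comap T inferInstance] T :=
    hTm.stronglyMeasurable
  have hTR_int : Integrable (fun ω => T ω * R ω) ℙ :=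
    integrable_mul_of_memL2 (hTmem.mono_exponent (by norm_num)) hR
  have hTcE_int : Integrable (fun ω => T ω * cE ω) ℙ :=
    integrable_mul_of_memL2 (hTmem.mono_exponent (by norm_num)) hcEmem
  have hEX : (∫ ω, X ω) = 0 := by
    have h : (∫ ω, X ω) = (∫ ω, T ω * R ω) - ∫ ω, T ω * cE ω := by
      rw [← integral_sub hTR_int hTcE_int]
      apply integral_congr_ae
      filter_upwards with ω
      simp only [hX_def]; ring
    rw [h, key T hTsm hTR_int hTcE_int, sub_self]
  have hVarX : Var X = ∫ ω, (T ω) ^ 2 * (R ω - cE ω) ^ 2 := by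
    rw [Var, hEX]
    simp only [ne_eq, OfNat.ofNat_ne_zero, not_false_eq_true, zero_pow, sub_zero]
    apply integral_congr_ae
    filter_upwards with ω
    simp only [hX_def]; ring
  constructor
  · intro f hf hY
    set Y : Ω → ℝ := fun ω => T ω * (R ω + f (T ω)) with hY_def
    set W : Ω → ℝ := fun ω => T ω * (cE ω + f (T ω)) with hW_def
    have hWmem : MemLp W 2 ℙ :=
      (hY.sub hXmem).ae_eq (Filter.Eventually.of_forall fun ω => by
        simp only [Pi.sub_apply, hY_def, hX_def, hW_def]; ring)
    -- E[X·W] = 0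
    have hgsm : StronglyMeasurable[MeasurableSpace.comap T inferInstance]
        (fun ω => T ω * W ω) := by
      have hcEsm : StronglyMeasurable[MeasurableSpace.comap T inferInstance] cE := by
        rw [hcE]; exact stronglyMeasurable_condExp
      have hfTsm : StronglyMeasurable[MeasurableSpace.comap T inferInstance]
          (fun ω => f (T ω)) := (hf.comp hTm).stronglyMeasurable
      exact hTsm.mul (hTsm.mul (hcEsm.add hfTsm))
    have hgmem : MemLp (fun ω => T ω * W ω) 2 ℙ := by
      have h := hWmem.smul (r := 2) hTmem
      exact h.ae_eq (Filter.Eventually.of_forall fun ω => by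
        simp [Pi.smul_apply, smul_eq_mul])
    have hgR_int : Integrable (fun ω => (T ω * W ω) * R ω) ℙ :=
      integrable_mul_of_memL2 hgmem hR
    have hgcE_int : Integrable (fun ω => (T ω * W ω) * cE ω) ℙ :=
      integrable_mul_of_memL2 hgmem hcEmem
    have hXW_int : Integrable (fun ω => X ω * W ω) ℙ :=
      integrable_mul_of_memL2 hXmem hWmem
    have hEXW : (∫ ω, X ω * W ω) = 0 := by
      have heq : (∫ ω, X ω * W ω)
          = (∫ ω, (T ω * W ω) * R ω) - ∫ ω, (T ω * W ω) * cE ω := by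
        rw [← integral_sub hgR_int hgcE_int]
        apply integral_congr_ae
        filter_upwards with ω
        simp only [hX_def, hW_def]; ring
      rw [heq, key _ hgsm hgR_int hgcE_int, sub_self]
    -- Expand Var Y
    have hXsq : Integrable (fun ω => X ω ^ 2) ℙ := hXmem.integrable_sq
    have hWsq : Integrable (fun ω => W ω ^ 2) ℙ := hWmem.integrable_sq
    have hXint : Integrable X ℙ := memLp_one_iff_integrable.mp
      (hXmem.mono_exponent (by norm_num))
    have hWint : Integrable W ℙ := memLp_one_iff_integrable.mp
      (hWmem.mono_exponent (by norm_num))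
    have hEY : (∫ ω, Y ω) = ∫ ω, W ω := by
      have h : (∫ ω, Y ω) = ∫ ω, (X ω + W ω) := by
        apply integral_congr_ae; filter_upwards with ω
        simp only [hY_def, hX_def, hW_def]; ring
      rw [h, integral_add hXint hWint, hEX, zero_add]
    have hEY2 : (∫ ω, Y ω ^ 2) = (∫ ω, X ω ^ 2) + (∫ ω, W ω ^ 2) := by
      have h1 : (∫ ω, Y ω ^ 2) = ∫ ω, ((X ω ^ 2 + W ω ^ 2) + 2 * (X ω * W ω)) := by
        apply integral_congr_ae; filter_upwards with ω
        simp only [hY_def, hX_def, hW_def]; ring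
      rw [h1, integral_add (by exact hXsq.add hWsq) (by exact hXW_int.const_mul 2),
        integral_add hXsq hWsq, integral_const_mul, hEXW]
      ring
    have hVarW_nonneg : 0 ≤ (∫ ω, W ω ^ 2) - (∫ ω, W ω) ^ 2 := by
      have h := variance_nonneg W (ℙ : Measure Ω)
      rwa [variance_eq_sub hWmem] at h
    have h : Var Y = Var X + ((∫ ω, W ω ^ 2) - (∫ ω, W ω) ^ 2) := by
      rw [Var, Var, hEY, hEY2, hEX]
      ring
    rw [h]
    linarith
  · exact hVarX
end

section
/- For every measurable f : ℝ → ℝ such that T·(R + f(T)) is square-integrable, the variance of the modified outcome Ŷ = T·(R + f(T)) decomposes as Var[T·(R + f(T))] = E[T²·(R − E[R|T])²] + Var[T·(E[R|T] + f(T))]. -/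
open MeasureTheory ProbabilityTheory

/-- Two `L²` functions have an integrable product. -/
lemma integrable_mul_of_memℒp_two {α : Type*} {m0 : MeasurableSpace α} {μ : Measure α}
    {u v : α → ℝ} (hu : MemLp u 2 μ) (hv : MemLp v 2 μ) :
    Integrable (fun ω => u ω * v ω) μ := by
  have h : MemLp (v • u) 1 μ :=
    hu.smul hv (hpqr := ⟨by rw [inv_one]; exact ENNReal.inv_two_add_inv_two⟩)
  have := memLp_one_iff_integrable.mp h
  exact this.congr (Filter.Eventually.of_forall fun ω => by simp [mul_comm])

/-- General form of the variance decomposition, stated for an explicit measure. -/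
lemma variance_decomposition_aux {α : Type*} {m m0 : MeasurableSpace α} {μ : Measure α}
    [IsProbabilityMeasure μ] (hm : m ≤ m0)
    (T R : α → ℝ) (hTm : Measurable[m] T) (C : ℝ) (hC : ∀ ω, |T ω| ≤ C)
    (hR : MemLp R 2 μ) (cE : α → ℝ) (hcE : cE = μ[R|m])
    (fT : α → ℝ) (hfTm : Measurable[m] fT)
    (hf2 : MemLp (fun ω => T ω * (R ω + fT ω)) 2 μ) :
    ((∫ ω, (T ω * (R ω + fT ω)) ^ 2 ∂μ) - (∫ ω, T ω * (R ω + fT ω) ∂μ) ^ 2)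
      = (∫ ω, (T ω) ^ 2 * (R ω - cE ω) ^ 2 ∂μ)
        + ((∫ ω, (T ω * (cE ω + fT ω)) ^ 2 ∂μ) - (∫ ω, T ω * (cE ω + fT ω) ∂μ) ^ 2) := by
  haveI : SigmaFinite (μ.trim hm) := inferInstance
  have hT : Measurable T := hTm.mono hm le_rfl
  have hfT : Measurable fT := hfTm.mono hm le_rfl
  have hcEm : StronglyMeasurable[m] cE := by rw [hcE]; exact stronglyMeasurable_condExp
  -- integrability facts
  have hcE2 : MemLp cE 2 μ := by rw [hcE]; exact memℒp_two_condexp hm hR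
  have hTR : MemLp (fun ω => T ω * R ω) 2 μ := by
    refine MemLp.of_le_mul (c := C) hR (hT.aestronglyMeasurable.mul hR.1) ?_
    filter_upwards with ω
    simp only [norm_mul, Real.norm_eq_abs]
    exact mul_le_mul_of_nonneg_right (hC ω) (abs_nonneg _)
  have hTcE : MemLp (fun ω => T ω * cE ω) 2 μ := by
    refine MemLp.of_le_mul (c := C) hcE2 (hT.aestronglyMeasurable.mul hcE2.1) ?_
    filter_upwards with ω
    simp only [norm_mul, Real.norm_eq_abs]
    exact mul_le_mul_of_nonneg_right (hC ω) (abs_nonneg _)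
  have hTf : MemLp (fun ω => T ω * fT ω) 2 μ := by
    have heq : (fun ω => T ω * fT ω)
        = fun ω => T ω * (R ω + fT ω) - T ω * R ω := by funext ω; ring
    rw [heq]; exact hf2.sub hTR
  set D : α → ℝ := fun ω => R ω - cE ω with hD_def
  set TD : α → ℝ := fun ω => T ω * D ω with hTD_def
  set G : α → ℝ := fun ω => T ω * (cE ω + fT ω) with hG_def
  have hTD2 : MemLp TD 2 μ := by
    have heq : TD = fun ω => T ω * R ω - T ω * cE ω := by funext ω; simp [TD, D]; ring
    rw [heq]; exact hTR.sub hTcE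
  have hG2 : MemLp G 2 μ := by
    have heq : G = fun ω => T ω * cE ω + T ω * fT ω := by funext ω; simp [G]; ring
    rw [heq]; exact hTcE.add hTf
  have hD_int : Integrable D μ := (hR.sub hcE2).integrable one_le_two
  have hTD_int : Integrable TD μ := hTD2.integrable one_le_two
  have hG_int : Integrable G μ := hG2.integrable one_le_two
  -- conditional expectation of D is zero
  have hcondD : μ[D|m] =ᵐ[μ] 0 := by
    have h1 : μ[D|m] =ᵐ[μ] μ[R|m] - μ[cE|m] :=
      condExp_sub (hR.integrable one_le_two) (hcE2.integrable one_le_two) m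
    have h2 : μ[cE|m] = cE :=
      condExp_of_stronglyMeasurable hm hcEm (hcE2.integrable one_le_two)
    refine h1.trans ?_
    rw [h2, ← hcE]
    filter_upwards with ω
    simp
  -- key vanishing lemma
  have hkey : ∀ (ψ : α → ℝ), StronglyMeasurable[m] ψ → Integrable (ψ * D) μ →
      ∫ ω, ψ ω * D ω ∂μ = 0 := by
    intro ψ hψm hψD
    have h1 : μ[ψ * D|m] =ᵐ[μ] ψ * μ[D|m] :=
      condExp_mul_of_stronglyMeasurable_left hψm hψD hD_int
    have h2 : μ[ψ * D|m] =ᵐ[μ] 0 := by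
      refine h1.trans ?_
      filter_upwards [hcondD] with ω hω
      simp [hω]
    calc ∫ ω, ψ ω * D ω ∂μ = ∫ ω, (μ[ψ * D|m]) ω ∂μ :=
          (integral_condExp (f := ψ * D) hm).symm
      _ = 0 := by rw [integral_congr_ae h2]; simp
  -- mean of TD is zero
  have hmean0 : ∫ ω, TD ω ∂μ = 0 := by
    have := hkey T hTm.stronglyMeasurable (by
      have h : (T * D : α → ℝ) = TD := by funext ω; simp [TD]
      rw [h]; exact hTD_int)
    simpa [TD] using this
  -- cross term is zero
  have hcross0 : ∫ ω, TD ω * G ω ∂μ = 0 := by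
    have hψm : StronglyMeasurable[m] (fun ω => G ω * T ω) :=
      ((hTm.stronglyMeasurable.mul (hcEm.add hfTm.stronglyMeasurable)).mul
        hTm.stronglyMeasurable)
    have hint : Integrable ((fun ω => G ω * T ω) * D) μ := by
      have heq : ((fun ω => G ω * T ω) * D) = fun ω => G ω * TD ω := by
        funext ω; simp [TD]; ring
      rw [heq]; exact integrable_mul_of_memℒp_two hG2 hTD2
    have h := hkey (fun ω => G ω * T ω) hψm hint
    have heq : ∀ ω, G ω * T ω * D ω = TD ω * G ω := by intro ω; simp [TD]; ring
    simp_rw [heq] at h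
    exact h
  -- square integrabilities
  have hTDsq : Integrable (fun ω => TD ω ^ 2) μ := hTD2.integrable_sq
  have hGsq : Integrable (fun ω => G ω ^ 2) μ := hG2.integrable_sq
  have hcross_int : Integrable (fun ω => TD ω * G ω) μ :=
    integrable_mul_of_memℒp_two hTD2 hG2
  -- decompose the integrals
  have hmean : ∫ ω, T ω * (R ω + fT ω) ∂μ = ∫ ω, G ω ∂μ := by
    have hsum : (fun ω => T ω * (R ω + fT ω)) = fun ω => TD ω + G ω := by
      funext ω; simp [TD, D, G]; ring
    rw [hsum, integral_add hTD_int hG_int, hmean0, zero_add]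
  have hsq : ∫ ω, (T ω * (R ω + fT ω)) ^ 2 ∂μ
      = (∫ ω, TD ω ^ 2 ∂μ) + ∫ ω, G ω ^ 2 ∂μ := by
    have h1 : ∀ ω, (T ω * (R ω + fT ω)) ^ 2
        = TD ω ^ 2 + (2 * (TD ω * G ω) + G ω ^ 2) := by
      intro ω; simp [TD, D, G]; ring
    calc ∫ ω, (T ω * (R ω + fT ω)) ^ 2 ∂μ
        = ∫ ω, (TD ω ^ 2 + (2 * (TD ω * G ω) + G ω ^ 2)) ∂μ :=
          integral_congr_ae (Filter.Eventually.of_forall h1)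
      _ = (∫ ω, TD ω ^ 2 ∂μ) + ∫ ω, (2 * (TD ω * G ω) + G ω ^ 2) ∂μ :=
          integral_add hTDsq ((hcross_int.const_mul 2).add hGsq)
      _ = (∫ ω, TD ω ^ 2 ∂μ) + ((2 * ∫ ω, TD ω * G ω ∂μ) + ∫ ω, G ω ^ 2 ∂μ) := by
          rw [integral_add (hcross_int.const_mul 2) hGsq, integral_const_mul]
      _ = (∫ ω, TD ω ^ 2 ∂μ) + ∫ ω, G ω ^ 2 ∂μ := by rw [hcross0]; ring
  have hTDsq_eq : ∫ ω, TD ω ^ 2 ∂μ = ∫ ω, (T ω) ^ 2 * (R ω - cE ω) ^ 2 ∂μ := by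
    refine integral_congr_ae (Filter.Eventually.of_forall fun ω => ?_)
    simp [TD, D]; ring
  rw [hsq, hmean, hTDsq_eq]
  ring

/-- For every measurable `f` with `T·(R + f(T))` square-integrable, the variance of the
modified outcome decomposes as
`Var[T·(R + f(T))] = E[T²·(R − E[R|T])²] + Var[T·(E[R|T] + f(T))]`. -/
theorem variance_decomposition_of_modified_outcome
    {Ω : Type*} [MeasureSpace Ω] [IsProbabilityMeasure (ℙ : Measure Ω)]
    (T R : Ω → ℝ) (hT : Measurable T) (hTbdd : ∃ C : ℝ, ∀ ω, |T ω| ≤ C)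
    (hR : MemLp R 2 ℙ)
    (cE : Ω → ℝ) (hcE : cE = ℙ[R | MeasurableSpace.comap T inferInstance])
    (f : ℝ → ℝ) (hf : Measurable f)
    (hf2 : MemLp (fun ω => T ω * (R ω + f (T ω))) 2 ℙ) :
    Var (fun ω => T ω * (R ω + f (T ω)))
      = (∫ ω, (T ω) ^ 2 * (R ω - cE ω) ^ 2)
        + Var (fun ω => T ω * (cE ω + f (T ω))) := by
  obtain ⟨C, hC⟩ := hTbdd
  have hTm : Measurable[MeasurableSpace.comap T inferInstance] T := fun s hs => ⟨s, hs, rfl⟩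
  have hfTm : Measurable[MeasurableSpace.comap T inferInstance] (fun ω => f (T ω)) :=
    hf.comp hTm
  exact variance_decomposition_aux hT.comap_le T R hTm C hC hR cE hcE
    (fun ω => f (T ω)) hfTm hf2
end

section
/- The centered modified outcome never has larger variance than the uncentered modified outcome: Var[T·(R − E[R|T])] ≤ Var[T·R]. -/
open MeasureTheory ProbabilityTheory

/-- Conditional expectation of an `L²` function is in `L²` (finite measure case). -/
lemma memLp_two_condexp_aux {α : Type*} {m m0 : MeasurableSpace α} {μ : Measure α}
    (hm : m ≤ m0) [IsFiniteMeasure μ] {f : α → ℝ} (hf : MemLp f 2 μ) :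
    MemLp (μ[f|m]) 2 μ := by
  have hfi : Integrable f μ := hf.integrable one_le_two
  set F : Lp ℝ 2 μ := hf.toLp f with hF
  have hFf : (F : α → ℝ) =ᵐ[μ] f := hf.coeFn_toLp
  have key : (condExpL2 ℝ ℝ hm F : α → ℝ) =ᵐ[μ] μ[f|m] := by
    refine ae_eq_condExp_of_forall_setIntegral_eq hm hfi
      (fun s hs hμs => integrableOn_condExpL2_of_measure_ne_top hm hμs.ne F)
      (fun s hs hμs => ?_) (lpMeas.aestronglyMeasurable _)
    rw [integral_condExpL2_eq_of_fin_meas_real F hs hμs.ne]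
    exact setIntegral_congr_ae (hm s hs) (hFf.mono fun x hx _ => hx)
  exact (Lp.memLp ((condExpL2 ℝ ℝ hm F : lpMeas ℝ ℝ m 2 μ) : Lp ℝ 2 μ)).ae_eq key

/-- The centered modified outcome never has larger variance than the uncentered
modified outcome: `Var[T·(R − E[R|T])] ≤ Var[T·R]`. -/
theorem variance_centered_le_variance_uncentered
    {Ω : Type*} [MeasureSpace Ω] [IsProbabilityMeasure (ℙ : Measure Ω)]
    (T R : Ω → ℝ) (hT : Measurable T) (hTbdd : ∃ C : ℝ, ∀ ω, |T ω| ≤ C)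
    (hR : MemLp R 2 ℙ)
    (cE : Ω → ℝ) (hcE : cE = ℙ[R | MeasurableSpace.comap T inferInstance]) :
    Var (fun ω => T ω * (R ω - cE ω)) ≤ Var (fun ω => T ω * R ω) := by
  obtain ⟨C, hC⟩ := hTbdd
  set m := MeasurableSpace.comap T inferInstance with hm_def
  have hm : m ≤ MeasureSpace.toMeasurableSpace := hT.comap_le
  have hTm : Measurable[m] T := Measurable.of_comap_le le_rfl
  have hTsm : StronglyMeasurable[m] T := hTm.stronglyMeasurable
  have hcE2 : MemLp cE 2 ℙ := hcE ▸ memLp_two_condexp_aux (μ := ℙ) hm hR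
  set f : Ω → ℝ := fun ω => T ω * R ω with hf_def
  set g : Ω → ℝ := fun ω => T ω * cE ω with hg_def
  have hTae : AEStronglyMeasurable[MeasureSpace.toMeasurableSpace] T ℙ := hT.aestronglyMeasurable
  have hfmem : MemLp f 2 ℙ := by
    refine MemLp.of_le_mul (c := C) hR (hTae.mul hR.aestronglyMeasurable)
      (Filter.Eventually.of_forall fun ω => ?_)
    simp only [hf_def, Real.norm_eq_abs, abs_mul]
    exact mul_le_mul_of_nonneg_right (hC ω) (abs_nonneg _)
  have hgmem : MemLp g 2 ℙ := by
    refine MemLp.of_le_mul (c := C) hcE2 (hTae.mul hcE2.aestronglyMeasurable)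
      (Filter.Eventually.of_forall fun ω => ?_)
    simp only [hg_def, Real.norm_eq_abs, abs_mul]
    exact mul_le_mul_of_nonneg_right (hC ω) (abs_nonneg _)
  have hf1 : Integrable f ℙ := hfmem.integrable one_le_two
  have hg1 : Integrable g ℙ := hgmem.integrable one_le_two
  have hf2 : Integrable (fun ω => f ω ^ 2) ℙ := hfmem.integrable_sq
  have hg2 : Integrable (fun ω => g ω ^ 2) ℙ := hgmem.integrable_sq
  have hgf : Integrable (fun ω => g ω * f ω) ℙ := by
    refine Integrable.mono' (hf2.add hg2)
      (hgmem.aestronglyMeasurable.mul hfmem.aestronglyMeasurable)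
      (Filter.Eventually.of_forall fun ω => ?_)
    rw [Real.norm_eq_abs, abs_mul, Pi.add_apply]
    nlinarith [sq_nonneg (|f ω| - |g ω|), sq_abs (f ω), sq_abs (g ω), abs_nonneg (f ω),
      abs_nonneg (g ω)]
  -- conditional expectation of f is g
  have hcond_f : ℙ[f|m] =ᵐ[ℙ] g := by
    have hfTR : f = T * R := rfl
    have h := condExp_mul_of_stronglyMeasurable_left (μ := ℙ) (m := m) hTsm
      (show Integrable (T * R) ℙ from hf1) (hR.integrable one_le_two)
    rw [← hfTR] at h
    refine h.mono fun ω hω => ?_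
    simp only [Pi.mul_apply] at hω
    simp only [hg_def, hω, ← hcE]
  -- pull-out: ∫ g·f = ∫ g²
  have hgsm : StronglyMeasurable[m] g := by
    refine hTsm.mul ?_
    rw [hcE]
    exact stronglyMeasurable_condExp
  have hIgf : ∫ ω, g ω * f ω = ∫ ω, g ω ^ 2 := by
    have h1 := condExp_mul_of_stronglyMeasurable_left (μ := ℙ) (m := m) hgsm
      (show Integrable (g * f) ℙ from hgf) hf1
    have h2 : ℙ[g * f|m] =ᵐ[ℙ] fun ω => g ω ^ 2 := by
      refine h1.trans (hcond_f.mono fun ω hω => ?_)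
      simp only [Pi.mul_apply, hω]
      ring
    calc ∫ ω, g ω * f ω = ∫ ω, (g * f) ω := rfl
      _ = ∫ ω, (ℙ[g * f|m]) ω ∂ℙ := (integral_condExp hm).symm
      _ = ∫ ω, g ω ^ 2 := integral_congr_ae h2
  -- equal means
  have hIg : ∫ ω, g ω = ∫ ω, f ω := by
    calc ∫ ω, g ω = ∫ ω, (ℙ[f|m]) ω ∂ℙ := (integral_congr_ae hcond_f).symm
      _ = ∫ ω, f ω := integral_condExp hm
  -- Cauchy–Schwarz: (∫ g)² ≤ ∫ g²
  have hCS : (∫ ω, g ω) ^ 2 ≤ ∫ ω, g ω ^ 2 := by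
    set c : ℝ := ∫ ω, g ω with hc
    have h0 : 0 ≤ ∫ ω, (g ω - c) ^ 2 := integral_nonneg fun ω => sq_nonneg _
    have hexp : ∫ ω, (g ω - c) ^ 2 = (∫ ω, g ω ^ 2) - 2 * c * c + c ^ 2 := by
      have heq : (fun ω => (g ω - c) ^ 2)
          = fun ω => (g ω ^ 2 - (2 * c) * g ω) + c ^ 2 := by
        funext ω; ring
      have hInt1 : Integrable (fun ω => g ω ^ 2 - 2 * c * g ω) ℙ :=
        hg2.sub (hg1.const_mul _)
      have hInt2 : Integrable (fun ω => 2 * c * g ω) ℙ := hg1.const_mul _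
      rw [heq, integral_add hInt1 (integrable_const _),
        integral_sub hg2 hInt2, MeasureTheory.integral_const_mul, integral_const]
      simp [← hc]
    nlinarith [h0, hexp]
  -- expand the variances
  have hsub : (fun ω => T ω * (R ω - cE ω)) = fun ω => f ω - g ω := by
    funext ω; simp only [hf_def, hg_def]; ring
  have hI1 : ∫ ω, (f ω - g ω) ^ 2 = (∫ ω, f ω ^ 2) - ∫ ω, g ω ^ 2 := by
    have heq : (fun ω => (f ω - g ω) ^ 2)
        = fun ω => (f ω ^ 2 - 2 * (g ω * f ω)) + g ω ^ 2 := by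
      funext ω; ring
    have hInt1 : Integrable (fun ω => f ω ^ 2 - 2 * (g ω * f ω)) ℙ :=
      hf2.sub (hgf.const_mul _)
    have hInt2 : Integrable (fun ω => 2 * (g ω * f ω)) ℙ := hgf.const_mul _
    rw [heq, integral_add hInt1 hg2, integral_sub hf2 hInt2, MeasureTheory.integral_const_mul, hIgf]
    ring
  have hI2 : ∫ ω, (f ω - g ω) = 0 := by
    rw [integral_sub hf1 hg1, hIg, sub_self]
  rw [hsub]
  simp only [Var, hI1, hI2]
  have : (∫ ω, f ω) ^ 2 ≤ ∫ ω, g ω ^ 2 := by rw [← hIg]; exact hCS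
  nlinarith [this]
end
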